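/- (Todd's lemma) An n×n real matrix N can be written as a product N = XS with X and S symmetric positive definite n×n real matrices if and only if N is diagonalizable over the reals with all eigenvalues strictly positive; that is, if and only if there exist an invertible real matrix P and a diagonal real matrix D with strictly positive diagonal entries such that N = P D P⁻¹. -/

import Mathlib

open Matrix

/-- Congruence of a positive definite matrix by an invertible matrix is positive definite. -/
lemma posDef_conj_aux {m : Type*} [Fintype m] [DecidableEq m]
    {A B : Matrix m m ℝ} (hA : A.PosDef) (hB : IsUnit B) : (Bᴴ * A * B).PosDef := by
  constructor
  · exact Matrix.isHermitian_conjTranspose_mul_mul B hA.1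
  · refine (Matrix.posDef_iff_dotProduct_mulVec.mpr
      ⟨Matrix.isHermitian_conjTranspose_mul_mul B hA.1, fun x hx => ?_⟩).2
    have hBx : B *ᵥ x ≠ 0 := by
      intro h
      apply hx
      have h2 : B⁻¹ *ᵥ (B *ᵥ x) = B⁻¹ *ᵥ 0 := by rw [h]
      rwa [Matrix.mulVec_mulVec, Matrix.nonsing_inv_mul B ((Matrix.isUnit_iff_isUnit_det B).mp hB),
        Matrix.one_mulVec, Matrix.mulVec_zero] at h2
    simpa only [star_mulVec, Matrix.dotProduct_mulVec, Matrix.vecMul_vecMul]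
      using hA.dotProduct_mulVec_pos hBx

lemma isUnit_of_unitaryGroup {m : Type*} [Fintype m] [DecidableEq m]
    {U : Matrix m m ℝ} (h : U ∈ Matrix.unitaryGroup m ℝ) : IsUnit U :=
  ⟨⟨U, star U, Matrix.mem_unitaryGroup_iff.mp h, Matrix.mem_unitaryGroup_iff'.mp h⟩, rfl⟩

/-- The square root of a positive semidefinite matrix (as in older Mathlib). -/
noncomputable def Matrix.PosSemidef.sqrt {m : Type*} [Fintype m] [DecidableEq m]
    {A : Matrix m m ℝ} (hA : A.PosSemidef) : Matrix m m ℝ :=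
  (hA.1.eigenvectorUnitary : Matrix m m ℝ) * diagonal ((↑) ∘ Real.sqrt ∘ hA.1.eigenvalues) *
    star (hA.1.eigenvectorUnitary : Matrix m m ℝ)

lemma Matrix.PosSemidef.sqrt_mul_self {m : Type*} [Fintype m] [DecidableEq m]
    {A : Matrix m m ℝ} (hA : A.PosSemidef) : hA.sqrt * hA.sqrt = A := by
  conv_rhs => rw [hA.1.spectral_theorem]
  have hd : diagonal ((↑) ∘ Real.sqrt ∘ hA.1.eigenvalues) *
      diagonal ((↑) ∘ Real.sqrt ∘ hA.1.eigenvalues) =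
      (diagonal (RCLike.ofReal ∘ hA.1.eigenvalues) : Matrix m m ℝ) := by
    rw [diagonal_mul_diagonal]
    congr 1
    funext i
    simp [Real.mul_self_sqrt (hA.eigenvalues_nonneg i)]
  simp only [Matrix.PosSemidef.sqrt, Unitary.conjStarAlgAut_apply, Unitary.coe_star]
  rw [← hd]
  simp only [mul_assoc, ← mul_assoc (star _) (_ : Matrix m m ℝ), Unitary.coe_star_mul_self,
    one_mul]

/-- The positive semidefinite square root of a positive definite matrix is positive definite. -/
lemma posDef_sqrt_aux {m : Type*} [Fintype m] [DecidableEq m]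
    {X : Matrix m m ℝ} (hX : X.PosDef) : (hX.posSemidef.sqrt).PosDef := by
  rw [Matrix.PosSemidef.sqrt]
  set U : Matrix m m ℝ := (hX.posSemidef.1.eigenvectorUnitary : Matrix m m ℝ) with hU
  have hUmem := (hX.posSemidef.1.eigenvectorUnitary).2
  have hUunit : IsUnit (star U) := by
    refine isUnit_of_unitaryGroup ?_
    exact Unitary.star_mem hUmem
  have hDiag : (Matrix.diagonal ((↑) ∘ Real.sqrt ∘ hX.posSemidef.1.eigenvalues) :
      Matrix m m ℝ).PosDef := by
    refine Matrix.posDef_diagonal_iff.mpr fun i => ?_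
    simpa using Real.sqrt_pos.mpr (hX.eigenvalues_pos i)
  have := posDef_conj_aux hDiag hUunit
  simpa [conjTranspose_conjTranspose, mul_assoc, Matrix.star_eq_conjTranspose] using this

/-- **Todd's lemma.**  An `n × n` real matrix `N` is a product `N = X * S` of two
symmetric positive definite matrices if and only if it is diagonalizable over `ℝ`
with all eigenvalues strictly positive, i.e. `N = P * D * P⁻¹` for some invertible
real matrix `P` and some diagonal matrix `D` with strictly positive diagonal. -/
theorem statement2 (n : ℕ) (N : Matrix (Fin n) (Fin n) ℝ) :
    (∃ X S : Matrix (Fin n) (Fin n) ℝ, X.PosDef ∧ S.PosDef ∧ N = X * S) ↔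
    (∃ P D : Matrix (Fin n) (Fin n) ℝ, IsUnit P ∧ D.IsDiag ∧
      (∀ i : Fin n, 0 < D i i) ∧ N = P * D * P⁻¹) := by
  constructor
  · rintro ⟨X, S, hX, hS, rfl⟩
    -- R is the positive definite square root of X
    have hR : (hX.posSemidef.sqrt).PosDef := posDef_sqrt_aux hX
    set R := hX.posSemidef.sqrt with hRdef
    have hRherm : Rᴴ = R := hR.1
    have hRunit : IsUnit R := hR.isUnit
    have hRdet : IsUnit R.det := (Matrix.isUnit_iff_isUnit_det R).mp hRunit
    have hXR : X = R * R := (hX.posSemidef.sqrt_mul_self).symm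
    -- M = R * S * R is positive definite
    have hM : (R * S * R).PosDef := by
      have := posDef_conj_aux hS hRunit
      rwa [hRherm] at this
    -- spectral theorem on M
    have hspec := hM.1.spectral_theorem
    set U : Matrix (Fin n) (Fin n) ℝ := (hM.1.eigenvectorUnitary : Matrix (Fin n) (Fin n) ℝ)
      with hUdef
    have hUmem := (hM.1.eigenvectorUnitary).2
    have hUunit : IsUnit U := isUnit_of_unitaryGroup hUmem
    have hUinv : U⁻¹ = star U :=
      Matrix.inv_eq_left_inv (Matrix.mem_unitaryGroup_iff'.mp hUmem)
    refine ⟨R * U, Matrix.diagonal (RCLike.ofReal ∘ hM.1.eigenvalues), hRunit.mul hUunit,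
      Matrix.isDiag_diagonal _, fun i => ?_, ?_⟩
    · simpa using hM.eigenvalues_pos i
    · rw [Matrix.mul_inv_rev, hUinv]
      have key : R * (R * S * R) * R⁻¹ = X * S := by
        rw [hXR]
        rw [show R * (R * S * R) * R⁻¹ = R * R * S * (R * R⁻¹) by
          simp only [mul_assoc]]
        rw [Matrix.mul_nonsing_inv R hRdet, mul_one]
      have hcong := congrArg (fun M => R * M * R⁻¹) hspec
      simp only [Unitary.conjStarAlgAut_apply, Unitary.coe_star, ← hUdef] at hcong
      rw [← key, hcong]
      simp only [mul_assoc]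
  · rintro ⟨P, D, hP, hD, hDpos, rfl⟩
    have hPdet : IsUnit P.det := (Matrix.isUnit_iff_isUnit_det P).mp hP
    have hPHunit : IsUnit Pᴴ := by
      refine (Matrix.isUnit_iff_isUnit_det Pᴴ).mpr ?_
      simpa [Matrix.det_conjTranspose] using hPdet
    have hPinvunit : IsUnit P⁻¹ := Matrix.isUnit_nonsing_inv_iff.mpr hP
    have hDdiag : Matrix.diagonal (fun i => D i i) = D := hD.diagonal_diag
    have hDpd : D.PosDef := by
      rw [← hDdiag]
      exact Matrix.posDef_diagonal_iff.mpr hDpos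
    refine ⟨P * Pᴴ, (P⁻¹)ᴴ * D * P⁻¹, ?_, posDef_conj_aux hDpd hPinvunit, ?_⟩
    · have := posDef_conj_aux (Matrix.PosDef.one (n := Fin n) (R := ℝ)) hPHunit
      simpa [mul_one] using this
    · rw [Matrix.conjTranspose_nonsing_inv]
      have : P * D * P⁻¹ = P * (Pᴴ * (Pᴴ)⁻¹) * D * P⁻¹ := by
        rw [Matrix.mul_nonsing_inv _ ((Matrix.isUnit_iff_isUnit_det Pᴴ).mp hPHunit), mul_one]
      rw [this]
      simp only [mul_assoc]
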